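/- Assume condition (*) and write A = ā(x). Among the n cyclic shifts of x there is exactly one index i* ∈ [1:n] such that Σ_{j=0}^{k−1} x_{i*+j} < A·k for all k = 1,…,n−1 (with equality Σ_{j=0}^{n−1} x_{i*+j} = A·n at k = n); i.e., exactly one cyclic shift (x_{i*}, x_{i*+1},…, x_{i*+n−1}) majorizes the constant tuple (A,…,A). -/

import Mathlib

open Finset

/-- Condition (*): `x_1, …, x_n` are linearly independent over `ℚ`. -/
def StarCond (n : ℕ) (x : ℤ → ℝ) : Prop :=
  LinearIndependent ℚ (fun i : Fin n => x ((i : ℤ) + 1))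

namespace UMS

variable (n : ℕ) (x : ℤ → ℝ)

/-- The average `ā(x)`. -/
noncomputable def A : ℝ := (∑ j ∈ Finset.Icc (1 : ℤ) (n : ℤ), x j) / n

/-- Normalized partial sums: `t m = x_1 + ⋯ + x_m − ā(x)·m`. -/
noncomputable def t (m : ℕ) : ℝ := (∑ j ∈ Finset.range m, x ((j : ℤ) + 1)) - A n x * m

lemma sum_Icc_eq : ∑ j ∈ Finset.Icc (1:ℤ) (n:ℤ), x j = ∑ j ∈ range n, x ((j:ℤ)+1) := by
  rw [show Finset.Icc (1:ℤ) (n:ℤ) = Finset.image (fun j : ℕ => (j:ℤ)+1) (range n) by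
    ext a; simp only [mem_Icc, mem_image, mem_range]; constructor
    · rintro ⟨h1, h2⟩; exact ⟨(a-1).toNat, by omega, by omega⟩
    · rintro ⟨b, hb, rfl⟩; omega]
  rw [Finset.sum_image (by intro a _ b _ h; have h' : (a:ℤ)+1 = (b:ℤ)+1 := h; omega)]

lemma full_sum (hn : 1 ≤ n) : ∑ j ∈ range n, x ((j:ℤ)+1) = A n x * n := by
  rw [A, sum_Icc_eq, div_mul_cancel₀]
  exact Nat.cast_ne_zero.mpr (by omega)

lemma shift_one (hper : ∀ i, x (i + (n : ℤ)) = x i) (a : ℤ) :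
    ∑ j ∈ range n, x (a + 1 + (j:ℤ)) = ∑ j ∈ range n, x (a + (j:ℤ)) := by
  have h1 := Finset.sum_range_succ (fun j : ℕ => x (a + (j:ℤ))) n
  have h2 := Finset.sum_range_succ' (fun j : ℕ => x (a + (j:ℤ))) n
  have e : ∑ j ∈ range n, x (a + ((j:ℕ)+1 : ℕ)) = ∑ j ∈ range n, x (a + 1 + (j:ℤ)) := by
    apply Finset.sum_congr rfl; intro j _; congr 1; omega
  have hp : x (a + (n:ℤ)) = x a := hper a
  simp only [Nat.cast_zero, add_zero] at h2
  rw [e] at h2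
  linarith [h1, h2]

lemma shift_full (hper : ∀ i, x (i + (n : ℤ)) = x i) (m : ℕ) :
    ∑ j ∈ range n, x ((m:ℤ) + 1 + (j:ℤ)) = ∑ j ∈ range n, x ((j:ℤ)+1) := by
  induction m with
  | zero => simp [add_comm]
  | succ k ih =>
    have := shift_one n x hper ((k:ℤ)+1)
    have e : ∑ j ∈ range n, x ((↑(k+1):ℤ) + 1 + (j:ℤ)) = ∑ j ∈ range n, x ((k:ℤ) + 1 + 1 + (j:ℤ)) := by
      apply Finset.sum_congr rfl; intro j _
      have : ((↑(k+1):ℤ) + 1 + (j:ℤ)) = ((k:ℤ) + 1 + 1 + (j:ℤ)) := by push_cast; ring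
      rw [this]
    rw [e, this, ih]

lemma t_per (hn : 1 ≤ n) (hper : ∀ i, x (i + (n : ℤ)) = x i) (m : ℕ) :
    t n x (m + n) = t n x m := by
  unfold t
  rw [Finset.sum_range_add]
  have e : ∑ j ∈ range n, x ((↑(m+j):ℤ)+1) = ∑ j ∈ range n, x ((m:ℤ) + 1 + (j:ℤ)) := by
    apply Finset.sum_congr rfl; intro j _; congr 1; omega
  rw [e, shift_full n x hper, full_sum n x hn]
  push_cast; ring

lemma window (r k : ℕ) :
    ∑ j ∈ range k, x (1 + (r:ℤ) + (j:ℤ)) = t n x (r+k) - t n x r + A n x * k := by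
  unfold t
  rw [Finset.sum_range_add]
  have e : ∑ j ∈ range k, x ((↑(r+j):ℤ)+1) = ∑ j ∈ range k, x (1 + (r:ℤ) + (j:ℤ)) := by
    apply Finset.sum_congr rfl; intro j _; congr 1; omega
  rw [e]; push_cast; ring

lemma t_ne (hn : 1 ≤ n) (hstar : LinearIndependent ℚ (fun i : Fin n => x ((i : ℤ) + 1)))
    {s d : ℕ} (hd : 0 < d) (hsd : s + d < n) : t n x (s + d) ≠ t n x s := by
  intro h
  have hW : ∑ j ∈ range d, x (((s+j : ℕ):ℤ)+1) = A n x * d := by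
    have hw := window n x s d
    have e : ∑ j ∈ range d, x (((s+j : ℕ):ℤ)+1) = ∑ j ∈ range d, x (1 + (s:ℤ) + (j:ℤ)) := by
      apply Finset.sum_congr rfl; intro j _; congr 1; omega
    rw [e, hw, h]; ring
  set c : Fin n → ℚ := fun j => (if s ≤ (j:ℕ) ∧ (j:ℕ) < s + d then (n:ℚ) else 0) - d with hc
  have hsum : ∑ j : Fin n, c j • x ((j:ℤ)+1) = 0 := by
    have e1 : ∑ j : Fin n, c j • x ((j:ℤ)+1)
        = ∑ j ∈ range n, ((if s ≤ j ∧ j < s + d then (n:ℝ) else 0) - d) * x ((j:ℤ)+1) := by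
      rw [← Fin.sum_univ_eq_sum_range (fun j => ((if s ≤ j ∧ j < s + d then (n:ℝ) else 0) - d) * x ((j:ℤ)+1)) n]
      apply Finset.sum_congr rfl; intro j _
      rw [hc, Rat.smul_def]
      by_cases hij : s ≤ (j:ℕ) ∧ (j:ℕ) < s + d
      · simp only [if_pos hij]; push_cast; ring
      · simp only [if_neg hij]; push_cast; ring
    rw [e1]
    have e2 : ∑ j ∈ range n, ((if s ≤ j ∧ j < s + d then (n:ℝ) else 0) - d) * x ((j:ℤ)+1)
        = (∑ j ∈ range n, (if s ≤ j ∧ j < s + d then (n:ℝ) * x ((j:ℤ)+1) else 0))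
          - (d:ℝ) * ∑ j ∈ range n, x ((j:ℤ)+1) := by
      rw [Finset.mul_sum, ← Finset.sum_sub_distrib]
      apply Finset.sum_congr rfl; intro j _; split <;> ring
    rw [e2, ← Finset.sum_filter]
    have e3 : Finset.filter (fun j => s ≤ j ∧ j < s + d) (range n) = Finset.Ico s (s+d) := by
      ext j; simp only [mem_filter, mem_range, mem_Ico]; omega
    rw [e3, ← Finset.mul_sum, Finset.sum_Ico_eq_sum_range]
    simp only [add_tsub_cancel_left]
    rw [hW, full_sum n x hn]
    ring
  have hzero := Fintype.linearIndependent_iff.mp hstar c hsum ⟨s+d, hsd⟩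
  rw [hc] at hzero
  simp only [not_lt, Fin.val_mk, lt_self_iff_false, and_false, if_false, zero_sub, neg_eq_zero,
    Nat.cast_eq_zero] at hzero
  omega

lemma t_inj (hn : 1 ≤ n) (hstar : LinearIndependent ℚ (fun i : Fin n => x ((i : ℤ) + 1)))
    {s r : ℕ} (hs : s < n) (hr : r < n) (h : t n x s = t n x r) : s = r := by
  rcases lt_trichotomy s r with hlt | he | hlt
  · have := t_ne n x hn hstar (s := s) (d := r - s) (by omega) (by omega)
    rw [show s + (r - s) = r by omega] at this
    exact absurd h.symm this
  · exact he
  · have := t_ne n x hn hstar (s := r) (d := s - r) (by omega) (by omega)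
    rw [show r + (s - r) = s by omega] at this
    exact absurd h this

end UMS

/-- Among the `n` cyclic shifts of `x` there is exactly one index `i* ∈ [1:n]`
such that `Σ_{j=0}^{k−1} x_{i*+j} < ā(x)·k` for `k = 1,…,n−1`, with equality
at `k = n`; i.e. exactly one cyclic shift majorizes the constant tuple. -/
theorem unique_majorizing_shift (n : ℕ) (hn : 1 ≤ n) (x : ℤ → ℝ)
    (hpos : ∀ i, 0 ≤ x i) (hper : ∀ i, x (i + (n : ℤ)) = x i)
    (hstar : StarCond n x) :
    ∃! i : ℤ, i ∈ Finset.Icc (1 : ℤ) (n : ℤ) ∧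
      (∀ k : ℕ, 1 ≤ k → k < n →
        ∑ j ∈ Finset.range k, x (i + (j : ℤ)) <
          ((∑ j ∈ Finset.Icc (1 : ℤ) (n : ℤ), x j) / n) * k) ∧
      ∑ j ∈ Finset.range n, x (i + (j : ℤ)) =
        ((∑ j ∈ Finset.Icc (1 : ℤ) (n : ℤ), x j) / n) * n := by
  have hA : ∀ y : ℝ, ((∑ j ∈ Finset.Icc (1 : ℤ) (n : ℤ), x j) / n) * y = UMS.A n x * y :=
    fun y => rfl
  have hstar' : LinearIndependent ℚ (fun i : Fin n => x ((i : ℤ) + 1)) := hstar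
  -- the strict maximum of t over [0, n)
  obtain ⟨r0, hr0mem, hr0max⟩ :=
    Finset.exists_max_image (range n) (UMS.t n x) ⟨0, mem_range.mpr (by omega)⟩
  have hr0 : r0 < n := mem_range.mp hr0mem
  have hstrict : ∀ s, s < n → s ≠ r0 → UMS.t n x s < UMS.t n x r0 := by
    intro s hs hne
    rcases lt_or_eq_of_le (hr0max s (mem_range.mpr hs)) with h | h
    · exact h
    · exact absurd (UMS.t_inj n x hn hstar' hs hr0 h) hne
  refine ⟨1 + (r0 : ℤ), ⟨?_, ?_, ?_⟩, ?_⟩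
  · simp only [mem_Icc]; omega
  · intro k hk1 hk2
    rw [hA, UMS.window n x r0 k]
    have hlt : UMS.t n x (r0 + k) < UMS.t n x r0 := by
      by_cases hc : r0 + k < n
      · exact hstrict _ hc (by omega)
      · have h1 : UMS.t n x (r0 + k - n + n) = UMS.t n x (r0 + k - n) :=
          UMS.t_per n x hn hper (r0 + k - n)
        rw [show r0 + k - n + n = r0 + k by omega] at h1
        rw [h1]
        exact hstrict _ (by omega) (by omega)
    linarith
  · rw [hA, UMS.window n x r0 n, UMS.t_per n x hn hper r0]
    ring
  · rintro i ⟨hmem, hlt, -⟩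
    rw [mem_Icc] at hmem
    set r : ℕ := (i - 1).toNat with hrdef
    have hir : i = 1 + (r : ℤ) := by omega
    have hrn : r < n := by omega
    have key : ∀ k : ℕ, 1 ≤ k → k < n → UMS.t n x (r + k) < UMS.t n x r := by
      intro k hk1 hk2
      have := hlt k hk1 hk2
      rw [hir, hA, UMS.window n x r k] at this
      linarith
    by_contra hne
    have hner : r ≠ r0 := by
      intro h; apply hne; rw [hir, h]
    rcases Nat.lt_or_ge r r0 with h | h
    · -- take k = r0 - r
      have hk := key (r0 - r) (by omega) (by omega)
      rw [show r + (r0 - r) = r0 by omega] at hk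
      exact absurd hk (not_lt.mpr (le_of_lt (hstrict r hrn hner)))
    · -- r0 < r; take k = r0 + n - r
      have hrgt : r0 < r := by omega
      have hk := key (r0 + n - r) (by omega) (by omega)
      rw [show r + (r0 + n - r) = r0 + n by omega, UMS.t_per n x hn hper r0] at hk
      exact absurd hk (not_lt.mpr (le_of_lt (hstrict r hrn hner)))
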